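/- Second Dolan–Grady condition for the quantum Ising chain: with H₀ = Σ_{p=1}^{n} τ^z_p and V = Σ_{p=1}^{n} τ^x_p τ^x_{p+1} on the n-site periodic chain, one also has [V, [V, [V, H₀]]] = 16 [V, H₀]. -/

import Mathlib

/-- The Pauli operator `τ^z_p` on the `n`-site spin-1/2 chain `(ℂ²)^{⊗n}`, realized
on the function space `(Fin n → Fin 2) → ℂ` with basis indexed by spin
configurations: it multiplies a basis state by `+1` if the spin at site `p` is up
and by `−1` if it is down. -/
noncomputable def tauZ (n : ℕ) (p : Fin n) :
    Module.End ℂ ((Fin n → Fin 2) → ℂ) :=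
  LinearMap.pi fun s => (if s p = 0 then (1 : ℂ) else -1) • LinearMap.proj s

/-- The Pauli operator `τ^x_p` on the `n`-site spin-1/2 chain: it flips the spin at
site `p`. -/
noncomputable def tauX (n : ℕ) (p : Fin n) :
    Module.End ℂ ((Fin n → Fin 2) → ℂ) :=
  LinearMap.pi fun s => LinearMap.proj (Function.update s p (1 - s p))

/-- `H₀ = Σ_p τ^z_p` for the quantum Ising chain. -/
noncomputable def isingH0 (n : ℕ) : Module.End ℂ ((Fin n → Fin 2) → ℂ) :=
  ∑ p : Fin n, tauZ n p

/-- `V = Σ_p τ^x_p τ^x_{p+1}` (periodic boundary conditions, indices mod `n`). -/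
noncomputable def isingV (n : ℕ) [NeZero n] : Module.End ℂ ((Fin n → Fin 2) → ℂ) :=
  ∑ p : Fin n, tauX n p * tauX n (p + 1)

/-- STATEMENT 18: the second Dolan–Grady condition for the quantum Ising chain:
`[V, [V, [V, H₀]]] = 16 [V, H₀]`. -/





lemma tauZ_apply (n : ℕ) (p : Fin n) (v : (Fin n → Fin 2) → ℂ) (s : Fin n → Fin 2) :
    tauZ n p v s = (if s p = 0 then (1:ℂ) else -1) * v s := by
  simp [tauZ, LinearMap.pi_apply, smul_eq_mul]; split <;> simp

lemma tauX_apply (n : ℕ) (p : Fin n) (v : (Fin n → Fin 2) → ℂ) (s : Fin n → Fin 2) :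
    tauX n p v s = v (Function.update s p (1 - s p)) := by
  simp [tauX, LinearMap.pi_apply]

lemma fin2_sub_sub (x : Fin 2) : 1 - (1 - x) = x := by fin_cases x <;> rfl

lemma fin2_sign (x : Fin 2) :
    (if (1 - x) = 0 then (1:ℂ) else -1) = -(if x = 0 then (1:ℂ) else -1) := by
  fin_cases x <;> norm_num


lemma update_cancel₁ {α : Sort*} {β : α → Sort*} [DecidableEq α] (f : ∀ i, β i) {a b : α}
    (h : a ≠ b) (w : β b) :
    Function.update (Function.update f b w) a (f a) = Function.update f b w := by
  conv_lhs => rw [show f a = Function.update f b w a from (Function.update_of_ne h w f).symm]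
  rw [Function.update_eq_self]

lemma update_cancel₂ {α : Sort*} {β : α → Sort*} [DecidableEq α] (f : ∀ i, β i) {a b c : α}
    (h1 : a ≠ b) (h2 : a ≠ c) (w : β b) (u : β c) :
    Function.update (Function.update (Function.update f c u) b w) a (f a)
      = Function.update (Function.update f c u) b w := by
  rw [show f a = Function.update f c u a from (Function.update_of_ne h2 u f).symm]
  exact update_cancel₁ _ h1 w

section micro
variable {n : ℕ} (a b c : Fin n)

-- [X a X b, Z a] = -2 (Z a X a X b)
lemma lie1 (hba : b ≠ a) :
    ⁅tauX n a * tauX n b, tauZ n a⁆ = (-2:ℂ) • (tauZ n a * tauX n a * tauX n b) := by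
  refine LinearMap.ext fun v => funext fun s => ?_
  simp only [Ring.lie_def, LinearMap.sub_apply, LinearMap.smul_apply, Pi.sub_apply,
    Pi.smul_apply, Module.End.mul_apply, tauX_apply, tauZ_apply, smul_eq_mul,
    Function.update_self, Function.update_of_ne hba, Function.update_of_ne hba.symm,
    fin2_sign, fin2_sub_sub, Function.update_idem, Function.update_comm hba,
    Function.update_eq_self]
  ring

-- [X a X b, Z b] = -2 (X a (Z b X b))
lemma lie2 (hba : b ≠ a) :
    ⁅tauX n a * tauX n b, tauZ n b⁆ = (-2:ℂ) • (tauX n a * (tauZ n b * tauX n b)) := by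
  refine LinearMap.ext fun v => funext fun s => ?_
  simp only [Ring.lie_def, LinearMap.sub_apply, LinearMap.smul_apply, Pi.sub_apply,
    Pi.smul_apply, Module.End.mul_apply, tauX_apply, tauZ_apply, smul_eq_mul,
    Function.update_self, Function.update_of_ne hba, Function.update_of_ne hba.symm,
    fin2_sign, fin2_sub_sub, Function.update_idem, Function.update_comm hba,
    Function.update_eq_self]
  ring

-- [X a X b, Z a X a X b] = -2 Z a
lemma lie3 (hba : b ≠ a) :
    ⁅tauX n a * tauX n b, tauZ n a * tauX n a * tauX n b⁆ = (-2:ℂ) • tauZ n a := by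
  refine LinearMap.ext fun v => funext fun s => ?_
  simp only [Ring.lie_def, LinearMap.sub_apply, LinearMap.smul_apply, Pi.sub_apply,
    Pi.smul_apply, Module.End.mul_apply, tauX_apply, tauZ_apply, smul_eq_mul,
    Function.update_self, Function.update_of_ne hba, Function.update_of_ne hba.symm,
    fin2_sign, fin2_sub_sub, Function.update_idem, Function.update_comm hba,
    Function.update_eq_self]
  ring

-- [X a X b, Z b X b X c] = -2 (X a Z b X c)
lemma lie4 (hba : b ≠ a) (hcb : c ≠ b) (hca : c ≠ a) :
    ⁅tauX n a * tauX n b, tauZ n b * tauX n b * tauX n c⁆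
      = (-2:ℂ) • (tauX n a * tauZ n b * tauX n c) := by
  refine LinearMap.ext fun v => funext fun s => ?_
  simp only [Ring.lie_def, LinearMap.sub_apply, LinearMap.smul_apply, Pi.sub_apply,
    Pi.smul_apply, Module.End.mul_apply, tauX_apply, tauZ_apply, smul_eq_mul,
    Function.update_self,
    Function.update_of_ne hba, Function.update_of_ne hba.symm,
    Function.update_of_ne hcb, Function.update_of_ne hcb.symm,
    Function.update_of_ne hca, Function.update_of_ne hca.symm,
    fin2_sign, fin2_sub_sub, Function.update_idem,
    Function.update_comm hba, Function.update_comm hcb, Function.update_comm hca,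
    Function.update_eq_self,
    update_cancel₁ _ hba, update_cancel₁ _ hcb, update_cancel₁ _ hca,
    update_cancel₁ _ hba.symm, update_cancel₁ _ hcb.symm, update_cancel₁ _ hca.symm,
    update_cancel₂ _ hcb hca, update_cancel₂ _ hca hcb]
  ring

-- [X a X b, X a (Z b X b)] = -2 Z b
lemma lie5 (hba : b ≠ a) :
    ⁅tauX n a * tauX n b, tauX n a * (tauZ n b * tauX n b)⁆ = (-2:ℂ) • tauZ n b := by
  refine LinearMap.ext fun v => funext fun s => ?_
  simp only [Ring.lie_def, LinearMap.sub_apply, LinearMap.smul_apply, Pi.sub_apply,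
    Pi.smul_apply, Module.End.mul_apply, tauX_apply, tauZ_apply, smul_eq_mul,
    Function.update_self, Function.update_of_ne hba, Function.update_of_ne hba.symm,
    fin2_sign, fin2_sub_sub, Function.update_idem, Function.update_comm hba,
    Function.update_eq_self]
  ring

-- [X b X c, X a (Z b X b)] = -2 (X a Z b X c)
lemma lie6 (hba : b ≠ a) (hcb : c ≠ b) (hca : c ≠ a) :
    ⁅tauX n b * tauX n c, tauX n a * (tauZ n b * tauX n b)⁆
      = (-2:ℂ) • (tauX n a * tauZ n b * tauX n c) := by
  refine LinearMap.ext fun v => funext fun s => ?_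
  simp only [Ring.lie_def, LinearMap.sub_apply, LinearMap.smul_apply, Pi.sub_apply,
    Pi.smul_apply, Module.End.mul_apply, tauX_apply, tauZ_apply, smul_eq_mul,
    Function.update_self,
    Function.update_of_ne hba, Function.update_of_ne hba.symm,
    Function.update_of_ne hcb, Function.update_of_ne hcb.symm,
    Function.update_of_ne hca, Function.update_of_ne hca.symm,
    fin2_sign, fin2_sub_sub, Function.update_idem,
    Function.update_comm hba, Function.update_comm hcb, Function.update_comm hca,
    Function.update_eq_self,
    update_cancel₁ _ hba, update_cancel₁ _ hcb, update_cancel₁ _ hca,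
    update_cancel₁ _ hba.symm, update_cancel₁ _ hcb.symm, update_cancel₁ _ hca.symm,
    update_cancel₂ _ hcb hca, update_cancel₂ _ hca hcb]
  ring

-- [X a X b, X a Z b X c] = -2 (Z b X b X c)
lemma lie7 (hba : b ≠ a) (hcb : c ≠ b) (hca : c ≠ a) :
    ⁅tauX n a * tauX n b, tauX n a * tauZ n b * tauX n c⁆
      = (-2:ℂ) • (tauZ n b * tauX n b * tauX n c) := by
  refine LinearMap.ext fun v => funext fun s => ?_
  simp only [Ring.lie_def, LinearMap.sub_apply, LinearMap.smul_apply, Pi.sub_apply,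
    Pi.smul_apply, Module.End.mul_apply, tauX_apply, tauZ_apply, smul_eq_mul,
    Function.update_self,
    Function.update_of_ne hba, Function.update_of_ne hba.symm,
    Function.update_of_ne hcb, Function.update_of_ne hcb.symm,
    Function.update_of_ne hca, Function.update_of_ne hca.symm,
    fin2_sign, fin2_sub_sub, Function.update_idem,
    Function.update_comm hba, Function.update_comm hcb, Function.update_comm hca,
    Function.update_eq_self,
    update_cancel₁ _ hba, update_cancel₁ _ hcb, update_cancel₁ _ hca,
    update_cancel₁ _ hba.symm, update_cancel₁ _ hcb.symm, update_cancel₁ _ hca.symm,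
    update_cancel₂ _ hcb hca, update_cancel₂ _ hca hcb]
  ring

-- [X b X c, X a Z b X c] = -2 (X a (Z b X b))
lemma lie8 (hba : b ≠ a) (hcb : c ≠ b) (hca : c ≠ a) :
    ⁅tauX n b * tauX n c, tauX n a * tauZ n b * tauX n c⁆
      = (-2:ℂ) • (tauX n a * (tauZ n b * tauX n b)) := by
  refine LinearMap.ext fun v => funext fun s => ?_
  simp only [Ring.lie_def, LinearMap.sub_apply, LinearMap.smul_apply, Pi.sub_apply,
    Pi.smul_apply, Module.End.mul_apply, tauX_apply, tauZ_apply, smul_eq_mul,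
    Function.update_self,
    Function.update_of_ne hba, Function.update_of_ne hba.symm,
    Function.update_of_ne hcb, Function.update_of_ne hcb.symm,
    Function.update_of_ne hca, Function.update_of_ne hca.symm,
    fin2_sign, fin2_sub_sub, Function.update_idem,
    Function.update_comm hba, Function.update_comm hcb, Function.update_comm hca,
    Function.update_eq_self,
    update_cancel₁ _ hba, update_cancel₁ _ hcb, update_cancel₁ _ hca,
    update_cancel₁ _ hba.symm, update_cancel₁ _ hcb.symm, update_cancel₁ _ hca.symm,
    update_cancel₂ _ hcb hca, update_cancel₂ _ hca hcb]
  ring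

end micro





section commute
variable {n : ℕ} (a b c d e : Fin n)

lemma commXX : Commute (tauX n a) (tauX n b) := by
  rcases eq_or_ne a b with rfl | h
  · exact Commute.refl _
  show _ = _
  refine LinearMap.ext fun v => funext fun s => ?_
  simp only [Module.End.mul_apply, tauX_apply]
  rw [Function.update_of_ne h, Function.update_of_ne h.symm, Function.update_comm h]

lemma commXZ (h : a ≠ b) : Commute (tauX n a) (tauZ n b) := by
  show _ = _
  refine LinearMap.ext fun v => funext fun s => ?_
  simp only [Module.End.mul_apply, tauX_apply, tauZ_apply]
  rw [Function.update_of_ne (Ne.symm h)]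

lemma lie_zero_of_commute {R : Type*} [Ring R] {x y : R} (h : Commute x y) : ⁅x, y⁆ = 0 := by
  rw [Ring.lie_def, h.eq, sub_self]

-- ⁅X a X b, Z c⁆ = 0
lemma zlie1 (h1 : a ≠ c) (h2 : b ≠ c) : ⁅tauX n a * tauX n b, tauZ n c⁆ = 0 :=
  lie_zero_of_commute ((commXZ a c h1).mul_left (commXZ b c h2))

-- ⁅X a X b, Z c X c X d⁆ = 0
lemma zlieM1 (h1 : a ≠ c) (h2 : b ≠ c) :
    ⁅tauX n a * tauX n b, tauZ n c * tauX n c * tauX n d⁆ = 0 :=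
  lie_zero_of_commute
    (((((commXZ a c h1).mul_left (commXZ b c h2)).mul_right
      ((commXX a c).mul_left (commXX b c)))).mul_right
      ((commXX a d).mul_left (commXX b d)))

-- ⁅X a X b, X c (Z d X d)⁆ = 0
lemma zlieM2 (h1 : a ≠ d) (h2 : b ≠ d) :
    ⁅tauX n a * tauX n b, tauX n c * (tauZ n d * tauX n d)⁆ = 0 :=
  lie_zero_of_commute
    (((commXX a c).mul_left (commXX b c)).mul_right
      (((commXZ a d h1).mul_left (commXZ b d h2)).mul_right
        ((commXX a d).mul_left (commXX b d))))

-- ⁅X a X b, X c Z d X e⁆ = 0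
lemma zlieG (h1 : a ≠ d) (h2 : b ≠ d) :
    ⁅tauX n a * tauX n b, tauX n c * tauZ n d * tauX n e⁆ = 0 :=
  lie_zero_of_commute
    ((((commXX a c).mul_left (commXX b c)).mul_right
      ((commXZ a d h1).mul_left (commXZ b d h2))).mul_right
      ((commXX a e).mul_left (commXX b e)))

end commute

section sums
variable {R : Type*} [Ring R] {ι : Type*}

lemma sum_lie' (s : Finset ι) (f : ι → R) (x : R) :
    ⁅∑ i ∈ s, f i, x⁆ = ∑ i ∈ s, ⁅f i, x⁆ := by
  simp only [Ring.lie_def, Finset.sum_mul, Finset.mul_sum, Finset.sum_sub_distrib]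

lemma lie_sum' (s : Finset ι) (f : ι → R) (x : R) :
    ⁅x, ∑ i ∈ s, f i⁆ = ∑ i ∈ s, ⁅x, f i⁆ := by
  simp only [Ring.lie_def, Finset.sum_mul, Finset.mul_sum, Finset.sum_sub_distrib]

lemma lie_smul' {M : Type*} [AddCommGroup M] [Module ℂ M] (c : ℂ) (x y : Module.End ℂ M) :
    ⁅x, c • y⁆ = c • ⁅x, y⁆ := by
  rw [Ring.lie_def, Ring.lie_def, mul_smul_comm, smul_mul_assoc, smul_sub]

lemma lie_add' {M : Type*} [AddCommGroup M] [Module ℂ M] (x y z : Module.End ℂ M) :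
    ⁅x, y + z⁆ = ⁅x, y⁆ + ⁅x, z⁆ := by
  rw [Ring.lie_def, Ring.lie_def, Ring.lie_def, mul_add, add_mul]; abel

lemma sum_support_pair {M : Type*} [AddCommMonoid M] {n : ℕ} (a b : Fin n) (hab : a ≠ b)
    {f : Fin n → M} (h : ∀ c, c ≠ a → c ≠ b → f c = 0) :
    ∑ c : Fin n, f c = f a + f b := by
  rw [← Finset.sum_pair hab]
  refine (Finset.sum_subset (Finset.subset_univ _) fun x _ hx => ?_).symm
  simp only [Finset.mem_insert, Finset.mem_singleton, not_or] at hx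
  exact h x hx.1 hx.2

lemma shift_sum {M : Type*} [AddCommMonoid M] {n : ℕ} [NeZero n] (f : Fin n → M) (c : Fin n) :
    ∑ p : Fin n, f (p + c) = ∑ p : Fin n, f p :=
  Fintype.sum_equiv (Equiv.addRight c) _ _ fun _ => rfl

lemma shift_sum_sub {M : Type*} [AddCommMonoid M] {n : ℕ} [NeZero n] (f : Fin n → M) (c : Fin n) :
    ∑ p : Fin n, f (p - c) = ∑ p : Fin n, f p :=
  Fintype.sum_equiv (Equiv.subRight c) _ _ fun _ => rfl

end sums

section main
variable {n : ℕ} [NeZero n]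

/-- `M1 p = Z p X p X (p+1)`. -/
noncomputable def M1 (n : ℕ) [NeZero n] (p : Fin n) : Module.End ℂ ((Fin n → Fin 2) → ℂ) :=
  tauZ n p * tauX n p * tauX n (p + 1)

/-- `M2 p = X p (Z (p+1) X (p+1))`. -/
noncomputable def M2 (n : ℕ) [NeZero n] (p : Fin n) : Module.End ℂ ((Fin n → Fin 2) → ℂ) :=
  tauX n p * (tauZ n (p + 1) * tauX n (p + 1))

/-- `Gg p = X p Z (p+1) X (p+2)`. -/
noncomputable def Gg (n : ℕ) [NeZero n] (p : Fin n) : Module.End ℂ ((Fin n → Fin 2) → ℂ) :=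
  tauX n p * tauZ n (p + 1) * tauX n (p + 1 + 1)

lemma fin_e1 (hn : 5 ≤ n) (p : Fin n) : p + 1 ≠ p := by
  intro h
  have h0 : (1 : Fin n) = 0 := by
    have := h; rwa [← add_zero p, add_assoc, zero_add, add_right_inj] at this
  have h1 : (1:Fin n).val = 1 := by rw [Fin.val_one']; exact Nat.mod_eq_of_lt (by omega)
  have := congrArg Fin.val h0
  rw [h1] at this
  simp at this

lemma fin_e3 (hn : 5 ≤ n) (p : Fin n) : p + 1 + 1 ≠ p := by
  intro h
  have h0 : (1 + 1 : Fin n) = 0 := by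
    have := h; rwa [add_assoc, ← add_zero p, add_assoc, zero_add, add_right_inj] at this
  have h1 : (1:Fin n).val = 1 := by rw [Fin.val_one']; exact Nat.mod_eq_of_lt (by omega)
  have := congrArg Fin.val h0
  rw [Fin.val_add, h1] at this
  rw [Nat.mod_eq_of_lt (by omega)] at this
  simp at this

lemma fin_e4 (hn : 5 ≤ n) (p : Fin n) : p ≠ p - 1 := by
  intro h
  exact fin_e1 hn (p - 1) (by rw [sub_add_cancel, ← h])

lemma fin_e5 (hn : 5 ≤ n) (p : Fin n) : p + 1 ≠ p - 1 := by
  intro h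
  refine fin_e3 hn (p - 1) ?_
  rw [sub_add_cancel]
  exact h

lemma lieV (B : Module.End ℂ ((Fin n → Fin 2) → ℂ)) :
    ⁅isingV n, B⁆ = ∑ q : Fin n, ⁅tauX n q * tauX n (q + 1), B⁆ := by
  rw [isingV, sum_lie']

lemma lieV_Z (hn : 5 ≤ n) (p : Fin n) :
    ⁅isingV n, tauZ n p⁆ = (-2 : ℂ) • (M1 n p + M2 n (p - 1)) := by
  rw [lieV, sum_support_pair p (p - 1) (fin_e4 hn p)
    (fun q hq1 hq2 => zlie1 _ _ _ hq1 (fun h => hq2 (eq_sub_iff_add_eq.mpr h)))]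
  rw [lie1 _ _ (fin_e1 hn p)]
  have hsub : p - 1 + 1 = p := sub_add_cancel p 1
  rw [show ⁅tauX n (p-1) * tauX n (p-1+1), tauZ n p⁆
      = (-2:ℂ) • (tauX n (p-1) * (tauZ n p * tauX n p)) by
    rw [hsub]; exact lie2 _ _ (fin_e4 hn p)]
  rw [M1, M2, hsub, smul_add]

lemma lieV_M1 (hn : 5 ≤ n) (p : Fin n) :
    ⁅isingV n, M1 n p⁆ = (-2 : ℂ) • (tauZ n p + Gg n (p - 1)) := by
  have hsub : p - 1 + 1 = p := sub_add_cancel p 1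
  rw [lieV, M1, sum_support_pair p (p - 1) (fin_e4 hn p)
    (fun q hq1 hq2 => zlieM1 _ _ _ _ hq1 (fun h => hq2 (eq_sub_iff_add_eq.mpr h)))]
  rw [lie3 _ _ (fin_e1 hn p)]
  rw [show ⁅tauX n (p-1) * tauX n (p-1+1), tauZ n p * tauX n p * tauX n (p+1)⁆
      = (-2:ℂ) • (tauX n (p-1) * tauZ n p * tauX n (p+1)) by
    rw [hsub]
    exact lie4 _ _ _ (fin_e4 hn p) (fin_e1 hn p) (fin_e5 hn p)]
  rw [Gg, hsub, smul_add]

lemma lieV_M2 (hn : 5 ≤ n) (p : Fin n) :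
    ⁅isingV n, M2 n p⁆ = (-2 : ℂ) • (tauZ n (p + 1) + Gg n p) := by
  rw [lieV, M2, sum_support_pair p (p + 1) (Ne.symm (fin_e1 hn p))
    (fun q hq1 hq2 => zlieM2 _ _ _ _ hq2
      (fun h => hq1 (by rwa [add_left_inj] at h)))]
  rw [lie5 _ _ (fin_e1 hn p),
    show ⁅tauX n (p+1) * tauX n (p+1+1), tauX n p * (tauZ n (p+1) * tauX n (p+1))⁆
      = (-2:ℂ) • (tauX n p * tauZ n (p+1) * tauX n (p+1+1)) from
    lie6 _ _ _ (fin_e1 hn p) (fin_e1 hn (p+1)) (fin_e3 hn p), Gg, smul_add]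

lemma lieV_G (hn : 5 ≤ n) (p : Fin n) :
    ⁅isingV n, Gg n p⁆ = (-2 : ℂ) • (M1 n (p + 1) + M2 n p) := by
  rw [lieV, Gg, sum_support_pair p (p + 1) (Ne.symm (fin_e1 hn p))
    (fun q hq1 hq2 => zlieG _ _ _ _ _ hq2
      (fun h => hq1 (by rwa [add_left_inj] at h)))]
  rw [lie7 _ _ _ (fin_e1 hn p) (fin_e1 hn (p+1)) (fin_e3 hn p),
    lie8 _ _ _ (fin_e1 hn p) (fin_e1 hn (p+1)) (fin_e3 hn p), M1, M2, smul_add]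

lemma stepC (hn : 5 ≤ n) :
    ⁅isingV n, isingH0 n⁆ = (-2 : ℂ) • ∑ p : Fin n, (M1 n p + M2 n p) := by
  rw [isingH0, lie_sum']
  rw [Finset.sum_congr rfl fun p _ => lieV_Z hn p]
  rw [← Finset.smul_sum, Finset.sum_add_distrib, Finset.sum_add_distrib,
    shift_sum_sub (fun p => M2 n p) 1]

lemma stepD (hn : 5 ≤ n) :
    ⁅isingV n, ⁅isingV n, isingH0 n⁆⁆
      = (8 : ℂ) • (isingH0 n + ∑ p : Fin n, Gg n p) := by
  rw [stepC hn, lie_smul', lie_sum']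
  rw [Finset.sum_congr rfl fun p _ => by
    rw [lie_add', lieV_M1 hn p, lieV_M2 hn p, ← smul_add]]
  rw [← Finset.smul_sum, smul_smul]
  norm_num
  rw [Finset.sum_congr rfl fun p _ => by
    rw [show tauZ n p + Gg n (p-1) + (tauZ n (p+1) + Gg n p)
      = (tauZ n p + tauZ n (p+1)) + (Gg n (p-1) + Gg n p) by abel]]
  rw [Finset.sum_add_distrib, Finset.sum_add_distrib, Finset.sum_add_distrib,
    shift_sum (fun p => tauZ n p) 1, shift_sum_sub (fun p => Gg n p) 1, ← isingH0]
  rw [show isingH0 n + isingH0 n + (∑ p : Fin n, Gg n p + ∑ p : Fin n, Gg n p)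
    = (2:ℂ) • (isingH0 n + ∑ p : Fin n, Gg n p) by
      rw [two_smul]; abel]
  rw [smul_smul]; norm_num

theorem stmt_19' (hn : 5 ≤ n) :
    ⁅isingV n, ⁅isingV n, ⁅isingV n, isingH0 n⁆⁆⁆ =
      (16 : ℂ) • ⁅isingV n, isingH0 n⁆ := by
  rw [stepD hn, lie_smul', lie_add', lie_sum']
  rw [Finset.sum_congr rfl fun p _ => lieV_G hn p]
  rw [← Finset.smul_sum, Finset.sum_add_distrib, shift_sum (fun p => M1 n p) 1,
    ← Finset.sum_add_distrib, ← stepC hn]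
  rw [show ⁅isingV n, isingH0 n⁆ + ⁅isingV n, isingH0 n⁆
    = (2:ℂ) • ⁅isingV n, isingH0 n⁆ by rw [two_smul]]
  rw [smul_smul]; norm_num

end main


theorem stmt_19 (n : ℕ) [NeZero n] (hn : 5 ≤ n) :
    ⁅isingV n, ⁅isingV n, ⁅isingV n, isingH0 n⁆⁆⁆ =
      (16 : ℂ) • ⁅isingV n, isingH0 n⁆ := by
  exact stmt_19' hn
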